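/- Assume a_X > b_X > 0 and a_Y + b_Y > 0, and let T_I = max{0, (b_Y − a_Y)/(2·ln(a_X/b_X))}, T_B = b_Y/ln(a_X/b_X), and x₁ = min{1/2, (b_Y − T_y·ln(a_X/b_X))/(a_Y + b_Y)}. If T_I < T_y < T_B, then there exists a unique x_L ∈ (0, x₁) such that L(x_L) = b_X/(a_X + b_X), and T_X(x) ≤ T_X(x_L) for every x ∈ (0, 1/2). -/

import Mathlib

open Real Filter Set Topology

/-- QRE response of the second player. -/
noncomputable def qreY (aY bY Ty : ℝ) (x : ℝ) : ℝ :=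
  (1 + Real.exp ((bY - (aY + bY) * x) / Ty))⁻¹

/-- QRE temperature curve for the first player. -/
noncomputable def qreTX (aX bX aY bY Ty : ℝ) (x : ℝ) : ℝ :=
  (bX - (aX + bX) * qreY aY bY Ty x) / Real.log (1 / x - 1)

/-- The auxiliary function L(x) = y(x) + x(1-x) ln(1/x-1) y'(x). -/
noncomputable def qreL (aY bY Ty : ℝ) (x : ℝ) : ℝ :=
  qreY aY bY Ty x + x * (1 - x) * Real.log (1 / x - 1) * deriv (qreY aY bY Ty) x

noncomputable def gfun (x : ℝ) : ℝ := Real.log (1 / x - 1)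

noncomputable def Dfun (aY bY Ty x : ℝ) : ℝ :=
  ((aY + bY) / Ty) * qreY aY bY Ty x * (1 - qreY aY bY Ty x)

lemma onePlusExp_pos (u : ℝ) : (0:ℝ) < 1 + Real.exp u := by positivity

lemma qreY_pos (aY bY Ty x : ℝ) : 0 < qreY aY bY Ty x := by
  unfold qreY; positivity

lemma qreY_lt_one (aY bY Ty x : ℝ) : qreY aY bY Ty x < 1 := by
  unfold qreY
  rw [inv_lt_one_iff₀]
  right
  linarith [Real.exp_pos ((bY - (aY + bY) * x) / Ty)]

lemma hasDerivAt_qreY (aY bY Ty : ℝ) (hTy : Ty ≠ 0) (x : ℝ) :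
    HasDerivAt (qreY aY bY Ty) (Dfun aY bY Ty x) x := by
  set c := aY + bY
  have h1 : HasDerivAt (fun x : ℝ => (bY - c * x) / Ty) (-(c / Ty)) x := by
    simpa [neg_div] using (((hasDerivAt_id x).const_mul c).const_sub bY).div_const Ty
  have h2 := (h1.exp).const_add 1
  have hne : 1 + Real.exp ((bY - c * x) / Ty) ≠ 0 := (onePlusExp_pos _).ne'
  have h3 := h2.inv hne
  refine h3.congr_deriv (Eq.symm ?_)
  unfold Dfun qreY
  set E := Real.exp ((bY - c * x) / Ty)
  have hE : 0 < E := Real.exp_pos _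
  field_simp
  ring

lemma hasDerivAt_gfun {x : ℝ} (hx : x ∈ Set.Ioo (0:ℝ) 1) :
    HasDerivAt gfun (-(1 / (x * (1 - x)))) x := by
  obtain ⟨hx0, hx1⟩ := hx
  have hinner : HasDerivAt (fun x : ℝ => 1 / x - 1) (-(x ^ 2)⁻¹) x := by
    simpa [one_div] using (hasDerivAt_inv hx0.ne').sub_const 1
  have hpos : 0 < 1 / x - 1 := by
    rw [sub_pos, lt_div_iff₀ hx0]; linarith
  have := (Real.hasDerivAt_log hpos.ne').comp x hinner
  refine this.congr_deriv (Eq.symm ?_)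
  have h1x : (0:ℝ) < 1 - x := by linarith
  rw [show (1/x - 1) = (1-x)/x by field_simp, inv_div]
  rw [div_mul_eq_mul_div, eq_div_iff h1x.ne']
  field_simp

lemma gfun_pos {x : ℝ} (hx : x ∈ Set.Ioo (0:ℝ) (1/2)) : 0 < gfun x := by
  obtain ⟨hx0, hx1⟩ := hx
  apply Real.log_pos
  rw [lt_sub_iff_add_lt, lt_div_iff₀ hx0]
  linarith

lemma qreL_eq (aY bY Ty : ℝ) (hTy : Ty ≠ 0) (x : ℝ) :
    qreL aY bY Ty x = qreY aY bY Ty x + x * (1 - x) * gfun x * Dfun aY bY Ty x := by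
  unfold qreL gfun
  rw [(hasDerivAt_qreY aY bY Ty hTy x).deriv]

lemma Dfun_pos (aY bY Ty : ℝ) (hY : 0 < aY + bY) (hTy : 0 < Ty) (x : ℝ) :
    0 < Dfun aY bY Ty x := by
  unfold Dfun
  have h1 := qreY_pos aY bY Ty x
  have h2 := qreY_lt_one aY bY Ty x
  have : (0:ℝ) < (aY + bY) / Ty := by positivity
  have := mul_pos (mul_pos this h1) (by linarith : (0:ℝ) < 1 - qreY aY bY Ty x)
  linarith

lemma hasDerivAt_Dfun (aY bY Ty : ℝ) (hTy : Ty ≠ 0) (x : ℝ) :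
    HasDerivAt (Dfun aY bY Ty) (((aY + bY) / Ty) * Dfun aY bY Ty x * (1 - 2 * qreY aY bY Ty x)) x := by
  have hy := hasDerivAt_qreY aY bY Ty hTy x
  have h := ((hy.const_mul ((aY + bY) / Ty)).mul ((hasDerivAt_const x 1).sub hy))
  refine h.congr_deriv (Eq.symm ?_)
  unfold Dfun
  simp only [Pi.sub_apply]
  ring

lemma hasDerivAt_qreL (aY bY Ty : ℝ) (hTy : Ty ≠ 0) {x : ℝ} (hx : x ∈ Set.Ioo (0:ℝ) 1) :
    HasDerivAt (qreL aY bY Ty)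
      (gfun x * Dfun aY bY Ty x *
        ((1 - 2 * x) + x * (1 - x) * ((aY + bY) / Ty) * (1 - 2 * qreY aY bY Ty x))) x := by
  have hEq : qreL aY bY Ty = fun x => qreY aY bY Ty x + x * (1 - x) * gfun x * Dfun aY bY Ty x :=
    funext (qreL_eq aY bY Ty hTy)
  rw [hEq]
  have hy := hasDerivAt_qreY aY bY Ty hTy x
  have hg := hasDerivAt_gfun hx
  have hD := hasDerivAt_Dfun aY bY Ty hTy x
  have hpoly : HasDerivAt (fun x : ℝ => x * (1 - x)) (1 - 2 * x) x := by
    have := (hasDerivAt_id x).mul ((hasDerivAt_const x 1).sub (hasDerivAt_id x))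
    refine this.congr_deriv (Eq.symm ?_)
    simp [id]
    ring
  have h := hy.add (((hpoly.mul hg).mul hD))
  refine h.congr_deriv (Eq.symm ?_)
  obtain ⟨hx0, hx1⟩ := hx
  have h1x : (1:ℝ) - x ≠ 0 := by linarith
  simp only [Pi.mul_apply]
  field_simp
  ring

lemma hasDerivAt_qreTX (aX bX aY bY Ty : ℝ) (hTy : Ty ≠ 0) {x : ℝ}
    (hx : x ∈ Set.Ioo (0:ℝ) (1/2)) :
    HasDerivAt (qreTX aX bX aY bY Ty)
      ((bX - (aX + bX) * qreL aY bY Ty x) / (x * (1 - x) * (gfun x) ^ 2)) x := by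
  obtain ⟨hx0, hx2⟩ := hx
  have hx1 : x < 1 := by linarith
  have hg : 0 < gfun x := gfun_pos ⟨hx0, hx2⟩
  have hy := hasDerivAt_qreY aY bY Ty hTy x
  have hN : HasDerivAt (fun x => bX - (aX + bX) * qreY aY bY Ty x)
      (-((aX + bX) * Dfun aY bY Ty x)) x := by
    simpa using (hy.const_mul (aX + bX)).const_sub bX
  have hg' := hasDerivAt_gfun ⟨hx0, hx1⟩
  have h := hN.div hg' hg.ne'
  have hEq : qreTX aX bX aY bY Ty = fun x =>
      (bX - (aX + bX) * qreY aY bY Ty x) / gfun x := rfl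
  rw [hEq]
  refine h.congr_deriv (Eq.symm ?_)
  rw [qreL_eq aY bY Ty hTy]
  have h1x : (0:ℝ) < 1 - x := by linarith
  field_simp
  ring

set_option maxHeartbeats 2000000 in
theorem stmt_9 (aX bX aY bY Ty : ℝ) (hTy : 0 < Ty)
    (hab : aX > bX) (hbX : bX > 0) (hY : aY + bY > 0)
    (hlo : max 0 ((bY - aY) / (2 * Real.log (aX / bX))) < Ty)
    (hhi : Ty < bY / Real.log (aX / bX)) :
    ∃ xL ∈ Set.Ioo (0:ℝ) (min (1/2 : ℝ) ((bY - Ty * Real.log (aX / bX)) / (aY + bY))),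
      qreL aY bY Ty xL = bX / (aX + bX) ∧
      (∀ x ∈ Set.Ioo (0:ℝ) (min (1/2 : ℝ) ((bY - Ty * Real.log (aX / bX)) / (aY + bY))),
        qreL aY bY Ty x = bX / (aX + bX) → x = xL) ∧
      ∀ x ∈ Set.Ioo (0:ℝ) (1/2), qreTX aX bX aY bY Ty x ≤ qreTX aX bX aY bY Ty xL := by
  have habX : (0:ℝ) < aX + bX := by linarith
  set k := Real.log (aX / bX) with hkdef
  have hk : 0 < k := Real.log_pos (by rw [lt_div_iff₀ hbX]; linarith)
  have hTyk : Ty * k < bY := by rwa [lt_div_iff₀ hk] at hhi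
  set x₁ := (bY - Ty * k) / (aY + bY) with hx₁def
  have hbY : 0 < bY := by nlinarith
  have hx₁pos : 0 < x₁ := div_pos (by linarith) hY
  have hloc : (bY - aY) / (2 * k) < Ty := (le_max_right _ _).trans_lt hlo
  have hx₁half : x₁ < 1/2 := by
    rw [hx₁def, div_lt_iff₀ hY]
    rw [div_lt_iff₀ (by positivity)] at hloc
    linarith
  have hmin : min (1/2 : ℝ) x₁ = x₁ := min_eq_right hx₁half.le
  rw [hmin]
  set t := bX / (aX + bX) with htdef
  have ht0 : 0 < t := by positivity
  have hthalf : t < 1/2 := by rw [htdef, div_lt_iff₀ habX]; linarith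
  have hexpk : Real.exp k = aX / bX := Real.exp_log (div_pos (by linarith) hbX)
  have h1t : (1 + Real.exp k)⁻¹ = t := by
    rw [hexpk, show (1:ℝ) + aX / bX = (aX + bX) / bX by field_simp; ring, inv_div]
  have hcx₁ : (aY + bY) * x₁ = bY - Ty * k := by
    rw [hx₁def]; field_simp
  have hYx₁ : qreY aY bY Ty x₁ = t := by
    unfold qreY
    rw [show (bY - (aY + bY) * x₁) / Ty = k by rw [hcx₁]; field_simp; ring, h1t]
  -- strict monotonicity of L on (0, x₁]
  have hYhalf : ∀ z ∈ Set.Ioo (0:ℝ) x₁, qreY aY bY Ty z < 1/2 := by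
    intro z hz
    have hzc : (aY + bY) * z < bY - Ty * k := by
      rw [← hcx₁]; exact (mul_lt_mul_iff_right₀ hY).2 hz.2
    have hE : (1:ℝ) < Real.exp ((bY - (aY + bY) * z) / Ty) := by
      rw [← Real.exp_zero]
      apply Real.exp_lt_exp.2
      apply div_pos _ hTy
      nlinarith
    unfold qreY
    rw [show (1:ℝ)/2 = 2⁻¹ by norm_num]
    exact inv_strictAnti₀ (by norm_num) (by linarith)
  have hmonoL : StrictMonoOn (qreL aY bY Ty) (Set.Ioc 0 x₁) := by
    apply strictMonoOn_of_deriv_pos (convex_Ioc _ _)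
    · intro z hz
      exact (hasDerivAt_qreL aY bY Ty hTy.ne' ⟨hz.1, by nlinarith [hz.2]⟩).continuousAt.continuousWithinAt
    · intro z hz
      rw [interior_Ioc] at hz
      rw [(hasDerivAt_qreL aY bY Ty hTy.ne' ⟨hz.1, by nlinarith [hz.2]⟩).deriv]
      have hz2 : z < 1/2 := hz.2.trans hx₁half
      have hg := gfun_pos ⟨hz.1, hz2⟩
      have hD := Dfun_pos aY bY Ty hY hTy z
      have hYz := hYhalf z hz
      have h1 : (0:ℝ) < 1 - 2 * z := by linarith
      have h2 : (0:ℝ) ≤ z * (1 - z) * ((aY + bY) / Ty) * (1 - 2 * qreY aY bY Ty z) := by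
        have : (0:ℝ) ≤ 1 - 2 * qreY aY bY Ty z := by linarith
        have hz1 : (0:ℝ) < 1 - z := by linarith
        exact mul_nonneg (mul_nonneg (mul_nonneg hz.1.le hz1.le)
          (by positivity : (0:ℝ) ≤ (aY + bY) / Ty)) this
      exact mul_pos (mul_pos hg hD) (by linarith)
  -- limit of L at 0+
  have hxlogx : Tendsto (fun x : ℝ => Real.log x * x) (𝓝[>] (0:ℝ)) (𝓝 0) := by
    simpa using tendsto_log_mul_rpow_nhdsGT_zero one_pos
  have hA : Tendsto (fun x : ℝ => x * (1 - x) * Real.log (1 - x)) (𝓝[>] (0:ℝ)) (𝓝 0) := by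
    have hc : ContinuousAt (fun x : ℝ => x * (1 - x) * Real.log (1 - x)) 0 := by
      apply ContinuousAt.mul
      · exact continuousAt_id.mul (continuousAt_const.sub continuousAt_id)
      · exact (Real.continuousAt_log (by norm_num)).comp (continuousAt_const.sub continuousAt_id)
    simpa using hc.tendsto.mono_left nhdsWithin_le_nhds
  have hB : Tendsto (fun x : ℝ => (1 - x) * (Real.log x * x)) (𝓝[>] (0:ℝ)) (𝓝 0) := by
    have h1 : Tendsto (fun x : ℝ => 1 - x) (𝓝[>] (0:ℝ)) (𝓝 1) := by
      have : ContinuousAt (fun x : ℝ => 1 - x) 0 := continuousAt_const.sub continuousAt_id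
      simpa using this.tendsto.mono_left nhdsWithin_le_nhds
    simpa using h1.mul hxlogx
  have hgt0 : Tendsto (fun x : ℝ => x * (1 - x) * gfun x) (𝓝[>] (0:ℝ)) (𝓝 0) := by
    have heq : ∀ᶠ x in 𝓝[>] (0:ℝ),
        x * (1 - x) * Real.log (1 - x) - (1 - x) * (Real.log x * x)
        = x * (1 - x) * gfun x := by
      have hmem : Set.Ioo (0:ℝ) 1 ∈ 𝓝[>] (0:ℝ) :=
        Ioo_mem_nhdsGT_of_mem ⟨le_refl 0, by norm_num⟩
      filter_upwards [hmem] with x hx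
      unfold gfun
      rw [show 1 / x - 1 = (1 - x) / x by rw [sub_div, div_self hx.1.ne'],
        Real.log_div (by linarith [hx.2]) hx.1.ne']
      ring
    have hAB := hA.sub hB
    rw [sub_zero] at hAB
    exact Tendsto.congr' heq hAB
  have hYcont : Continuous (qreY aY bY Ty) := by
    unfold qreY
    apply Continuous.inv₀
    · fun_prop
    · exact fun x => (onePlusExp_pos _).ne'
  have hDcont : Continuous (Dfun aY bY Ty) := by
    unfold Dfun
    exact (continuous_const.mul hYcont).mul (continuous_const.sub hYcont)
  have hLtend : Tendsto (qreL aY bY Ty) (𝓝[>] (0:ℝ)) (𝓝 (qreY aY bY Ty 0)) := by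
    have h2 : Tendsto (fun x => qreY aY bY Ty x + (x * (1 - x) * gfun x) * Dfun aY bY Ty x)
        (𝓝[>] (0:ℝ)) (𝓝 (qreY aY bY Ty 0 + 0 * Dfun aY bY Ty 0)) :=
      ((hYcont.tendsto 0).mono_left nhdsWithin_le_nhds).add
        (hgt0.mul ((hDcont.tendsto 0).mono_left nhdsWithin_le_nhds))
    rw [zero_mul, add_zero] at h2
    exact h2.congr (fun x => (qreL_eq aY bY Ty hTy.ne' x).symm)
  have hY0 : qreY aY bY Ty 0 < t := by
    unfold qreY
    rw [show (bY - (aY + bY) * 0) / Ty = bY / Ty by rw [mul_zero, sub_zero], ← h1t]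
    have hkb : k < bY / Ty := (lt_div_iff₀ hTy).2 (by linarith)
    have := Real.exp_lt_exp.2 hkb
    exact inv_strictAnti₀ (onePlusExp_pos k) (by linarith)
  have hevlt : ∀ᶠ x in 𝓝[>] (0:ℝ), qreL aY bY Ty x < t :=
    hLtend.eventually_lt_const hY0
  have hmem : ∀ᶠ x in 𝓝[>] (0:ℝ), x ∈ Set.Ioo (0:ℝ) x₁ :=
    Ioo_mem_nhdsGT_of_mem ⟨le_refl 0, hx₁pos⟩
  obtain ⟨a, haL, ha⟩ := (hevlt.and hmem).exists
  have hLx₁gt : t < qreL aY bY Ty x₁ := by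
    rw [qreL_eq aY bY Ty hTy.ne', hYx₁]
    have hg := gfun_pos ⟨hx₁pos, hx₁half⟩
    have hD := Dfun_pos aY bY Ty hY hTy x₁
    nlinarith [mul_pos (mul_pos (mul_pos hx₁pos (by linarith : (0:ℝ) < 1 - x₁)) hg) hD]
  have hcontL : ContinuousOn (qreL aY bY Ty) (Set.Icc a x₁) := by
    intro z hz
    exact (hasDerivAt_qreL aY bY Ty hTy.ne'
      ⟨lt_of_lt_of_le ha.1 hz.1, by linarith [hz.2, hx₁half]⟩).continuousAt.continuousWithinAt
  obtain ⟨xL, hxLmem, hxLval⟩ := intermediate_value_Ioo ha.2.le hcontL ⟨haL, hLx₁gt⟩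
  have hxL0 : 0 < xL := ha.1.trans hxLmem.1
  have hxLx₁ : xL < x₁ := hxLmem.2
  have hxLhalf : xL < 1/2 := hxLx₁.trans hx₁half
  refine ⟨xL, ⟨hxL0, hxLx₁⟩, hxLval, ?_, ?_⟩
  · intro x hx hxv
    exact hmonoL.injOn ⟨hx.1, hx.2.le⟩ ⟨hxL0, hxLx₁.le⟩ (hxv.trans hxLval.symm)
  · intro x hx
    have hLlt : ∀ z ∈ Set.Ioo (0:ℝ) xL, qreL aY bY Ty z < t := by
      intro z hz
      have := hmonoL ⟨hz.1, (hz.2.trans hxLx₁).le⟩ ⟨hxL0, hxLx₁.le⟩ hz.2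
      rwa [hxLval] at this
    have hLgt : ∀ z ∈ Set.Ioo xL (1/2:ℝ), t < qreL aY bY Ty z := by
      intro z hz
      rcases le_or_gt z x₁ with h | h
      · have := hmonoL ⟨hxL0, hxLx₁.le⟩ ⟨hxL0.trans hz.1, h⟩ hz.1
        rwa [hxLval] at this
      · have hYz : t ≤ qreY aY bY Ty z := by
          have hE : Real.exp ((bY - (aY + bY) * z) / Ty) ≤ Real.exp k := by
            apply Real.exp_le_exp.2
            rw [div_le_iff₀ hTy]
            have h2 : (aY + bY) * x₁ ≤ (aY + bY) * z := (mul_le_mul_iff_right₀ hY).2 h.le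
            rw [hcx₁] at h2
            linarith
          rw [← h1t]
          unfold qreY
          exact inv_anti₀ (onePlusExp_pos _) (by linarith)
        have hzg := gfun_pos ⟨hxL0.trans hz.1, hz.2⟩
        have hzD := Dfun_pos aY bY Ty hY hTy z
        rw [qreL_eq aY bY Ty hTy.ne']
        have h1z : (0:ℝ) < 1 - z := by linarith [hz.2]
        nlinarith [mul_pos (mul_pos (mul_pos (hxL0.trans hz.1) h1z) hzg) hzD]
    rcases lt_trichotomy x xL with hlt | heq | hgt
    · have hm : StrictMonoOn (qreTX aX bX aY bY Ty) (Set.Icc x xL) := by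
        apply strictMonoOn_of_deriv_pos (convex_Icc _ _)
        · intro z hz
          exact (hasDerivAt_qreTX aX bX aY bY Ty hTy.ne'
            ⟨hx.1.trans_le hz.1, lt_of_le_of_lt hz.2 hxLhalf⟩).continuousAt.continuousWithinAt
        · intro z hz
          rw [interior_Icc] at hz
          have hz01 : z ∈ Set.Ioo (0:ℝ) (1/2) := ⟨hx.1.trans hz.1, hz.2.trans hxLhalf⟩
          rw [(hasDerivAt_qreTX aX bX aY bY Ty hTy.ne' hz01).deriv]
          apply div_pos
          · have hlz := hLlt z ⟨hz01.1, hz.2⟩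
            rw [htdef, lt_div_iff₀ habX] at hlz
            linarith
          · have hg := gfun_pos hz01
            have h1z : (0:ℝ) < 1 - z := by linarith [hz01.2]
            exact mul_pos (mul_pos hz01.1 h1z) (pow_pos hg 2)
      exact (hm ⟨le_refl x, hlt.le⟩ ⟨hlt.le, le_refl xL⟩ hlt).le
    · rw [heq]
    · have hm : StrictAntiOn (qreTX aX bX aY bY Ty) (Set.Icc xL x) := by
        apply strictAntiOn_of_deriv_neg (convex_Icc _ _)
        · intro z hz
          exact (hasDerivAt_qreTX aX bX aY bY Ty hTy.ne'
            ⟨hxL0.trans_le hz.1, lt_of_le_of_lt hz.2 hx.2⟩).continuousAt.continuousWithinAt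
        · intro z hz
          rw [interior_Icc] at hz
          have hz01 : z ∈ Set.Ioo (0:ℝ) (1/2) := ⟨hxL0.trans hz.1, hz.2.trans hx.2⟩
          rw [(hasDerivAt_qreTX aX bX aY bY Ty hTy.ne' hz01).deriv]
          apply div_neg_of_neg_of_pos
          · have hlz := hLgt z ⟨hz.1, hz01.2⟩
            rw [htdef, div_lt_iff₀ habX] at hlz
            linarith
          · have hg := gfun_pos hz01
            have h1z : (0:ℝ) < 1 - z := by linarith [hz01.2]
            exact mul_pos (mul_pos hz01.1 h1z) (pow_pos hg 2)
      exact (hm ⟨le_refl xL, hgt.le⟩ ⟨hgt.le, le_refl x⟩ hgt).le
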